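/- For fixed z > 0, the function τ ↦ ((1-τ)/2)·log₂(1 + βτ/(1-τ)) with β = 2ηPz/N₀ attains its maximum over τ ∈ (0,1) at τ̂ = (e^{W((β-1)/e)+1} − 1)/(β + e^{W((β-1)/e)+1} − 1), where W is the Lambert W function (principal branch). -/

import Mathlib

/-- For β > 0, the function τ ↦ ((1-τ)/2)·log₂(1 + βτ/(1-τ)) attains its maximum
over (0,1) at τopt = (e^{W((β-1)/e)+1} − 1)/(β + e^{W((β-1)/e)+1} − 1), where W is the
principal branch of the Lambert W function (characterized by W·e^W = (β-1)/e, W ≥ -1). -/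
theorem optimal_tau {β : ℝ} (hβ : 0 < β) (Wv : ℝ)
    (hW : Wv * Real.exp Wv = (β - 1) / Real.exp 1) (hW1 : -1 ≤ Wv) :
    (Real.exp (Wv + 1) - 1) / (β + Real.exp (Wv + 1) - 1) ∈ Set.Ioo (0:ℝ) 1 ∧
    ∀ τ ∈ Set.Ioo (0:ℝ) 1,
      ((1 - τ) / 2) * Real.logb 2 (1 + β * τ / (1 - τ)) ≤
      (let τopt := (Real.exp (Wv + 1) - 1) / (β + Real.exp (Wv + 1) - 1);
        ((1 - τopt) / 2) * Real.logb 2 (1 + β * τopt / (1 - τopt))) := by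
  have hE : Real.exp (Wv + 1) = Real.exp Wv * Real.exp 1 := Real.exp_add Wv 1
  set A := Real.exp (Wv + 1) with hAdef
  have hApos : 0 < A := Real.exp_pos _
  have hkey : Wv * A = β - 1 := by
    have h1 : Real.exp 1 ≠ 0 := (Real.exp_pos 1).ne'
    rw [hE, ← mul_assoc, hW]
    field_simp
  have huz : 0 < Wv + 1 := by
    rcases eq_or_lt_of_le hW1 with h | h
    · exfalso
      have hA1 : A = 1 := by rw [hAdef, ← h]; simp
      rw [hA1, ← h] at hkey
      linarith
    · linarith
  have hA1 : 1 < A := by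
    have := Real.add_one_le_exp (Wv + 1)
    rw [← hAdef] at this
    linarith
  have hden : β + A - 1 = (Wv + 1) * A := by
    rw [add_mul, hkey, one_mul]; ring
  have hDpos : 0 < β + A - 1 := by rw [hden]; exact mul_pos huz hApos
  set τo := (A - 1) / (β + A - 1) with hτodef
  have hτopos : 0 < τo := div_pos (by linarith) hDpos
  have hτolt : τo < 1 := (div_lt_one hDpos).mpr (by linarith)
  refine ⟨⟨hτopos, hτolt⟩, ?_⟩
  intro τ hτ
  obtain ⟨h0, h1⟩ := hτ
  have h1τ : 0 < 1 - τ := by linarith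
  show ((1 - τ) / 2) * Real.logb 2 (1 + β * τ / (1 - τ)) ≤
      ((1 - τo) / 2) * Real.logb 2 (1 + β * τo / (1 - τo))
  have log2pos : 0 < Real.log 2 := Real.log_pos (by norm_num)
  -- simplify the RHS
  have h1τo : 1 - τo = β / (β + A - 1) := by
    rw [hτodef]
    field_simp
    ring
  have hfrac : β * τo / (1 - τo) = A - 1 := by
    rw [h1τo, hτodef]
    field_simp
  have hRHS : ((1 - τo) / 2) * Real.logb 2 (1 + β * τo / (1 - τo)) =
      (β / A) / (2 * Real.log 2) := by
    rw [hfrac, h1τo, hden, show (1 : ℝ) + (A - 1) = A by ring,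
      Real.logb, hAdef, Real.log_exp]
    field_simp
  rw [hRHS]
  -- the LHS
  set x := 1 + β * τ / (1 - τ) with hxdef
  have hx1 : (1 : ℝ) < x := by
    have : 0 < β * τ / (1 - τ) := div_pos (mul_pos hβ h0) h1τ
    rw [hxdef]; linarith
  have hx : 0 < x := by linarith
  have hxval : (1 - τ) * x = 1 - τ + β * τ := by
    rw [hxdef]
    field_simp
  -- tangent line inequality
  have hlog : Real.log (x / A) ≤ x / A - 1 :=
    Real.log_le_sub_one_of_pos (div_pos hx hApos)
  have hlogx : Real.log x ≤ x / A + Wv := by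
    rw [Real.log_div hx.ne' hApos.ne', hAdef, Real.log_exp] at hlog
    linarith
  have hkey2 : (1 - τ) * Real.log x ≤ β / A := by
    have heq : (1 - τ) * (x / A + Wv) = β / A := by
      have h : (1 - τ) * x + (1 - τ) * (Wv * A) = β := by
        rw [hxval, hkey]; ring
      field_simp
      linear_combination h
    calc (1 - τ) * Real.log x ≤ (1 - τ) * (x / A + Wv) :=
          mul_le_mul_of_nonneg_left hlogx h1τ.le
      _ = β / A := heq
  have hL : ((1 - τ) / 2) * Real.logb 2 x = ((1 - τ) * Real.log x) / (2 * Real.log 2) := by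
    rw [Real.logb]; ring
  have hR : (β / A) / (2 * Real.log 2) = (β / A) / (2 * Real.log 2) := rfl
  rw [hL]
  gcongr
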